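/- For q ≥ 2, the border rank of the easy Coppersmith–Winograd tensor T_cw = Σ_{i=1}^q (e₀⊗eᵢ⊗eᵢ + eᵢ⊗e₀⊗eᵢ + eᵢ⊗eᵢ⊗e₀) ∈ ℂ^{q+1} ⊗ ℂ^{q+1} ⊗ ℂ^{q+1} equals q + 2. -/

import Mathlib

open scoped BigOperators

/-- `T` is a sum of `r` decomposable tensors (i.e. has rank at most `r`). -/
def rankLE {n₁ n₂ n₃ : ℕ} (T : Fin n₁ → Fin n₂ → Fin n₃ → ℂ) (r : ℕ) : Prop :=
  ∃ u : Fin r → Fin n₁ → ℂ, ∃ v : Fin r → Fin n₂ → ℂ, ∃ w : Fin r → Fin n₃ → ℂ,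
    T = fun i j k => ∑ s, u s i * v s j * w s k

/-- The border rank of a tensor: the least `r` such that `T` is a limit of
tensors of rank at most `r`. -/
noncomputable def bRank {n₁ n₂ n₃ : ℕ} (T : Fin n₁ → Fin n₂ → Fin n₃ → ℂ) : ℕ :=
  sInf {r | T ∈ closure {S | rankLE S r}}

/-- The coordinate of the standard basis vector `e_a` of `ℂⁿ`. -/
noncomputable def δ {n : ℕ} (a i : Fin n) : ℂ := if i = a then 1 else 0

/-- The easy Coppersmith–Winograd tensor
`T_cw = Σ_{i=1}^q (e₀⊗eᵢ⊗eᵢ + eᵢ⊗e₀⊗eᵢ + eᵢ⊗eᵢ⊗e₀) ∈ ℂ^{q+1} ⊗ ℂ^{q+1} ⊗ ℂ^{q+1}`,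
in coordinates. -/
noncomputable def Tcw (q : ℕ) : Fin (q + 1) → Fin (q + 1) → Fin (q + 1) → ℂ :=
  fun i j k =>
    ∑ t : Fin q,
      (δ 0 i * δ t.succ j * δ t.succ k +
       δ t.succ i * δ 0 j * δ t.succ k +
       δ t.succ i * δ t.succ j * δ 0 k)

open Matrix

namespace S14

noncomputable def sg {q : ℕ} (i : Fin (q+1)) : ℂ := if i = 0 then 0 else 1
noncomputable def τ {q : ℕ} (i j : Fin (q+1)) : ℂ := if i = j then sg i else 0

variable {q : ℕ}

lemma zero_ne_succ (s : Fin q) : (0 : Fin (q+1)) ≠ s.succ := (Fin.succ_ne_zero s).symm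

lemma sum1 (i : Fin (q+1)) : ∑ s : Fin q, δ s.succ i = sg i := by
  induction i using Fin.cases with
  | zero => simp [δ, sg, zero_ne_succ]
  | succ a =>
    simp only [δ, sg, Fin.succ_inj]
    rw [Finset.sum_eq_single a]
    · simp [Fin.succ_ne_zero]
    · intro b _ hb; simp [Ne.symm hb]
    · simp

lemma sum2 (i j : Fin (q+1)) : ∑ s : Fin q, δ s.succ i * δ s.succ j = τ i j := by
  induction i using Fin.cases with
  | zero => simp [δ, τ, sg, zero_ne_succ]
  | succ a =>
    simp only [δ, τ, sg, Fin.succ_inj]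
    rw [Finset.sum_eq_single a]
    · by_cases h1 : j = a.succ <;> simp [h1, Fin.succ_ne_zero, eq_comm]
    · intro b _ hb; simp [Ne.symm hb]
    · simp

lemma sum3 (i j k : Fin (q+1)) :
    ∑ s : Fin q, δ s.succ i * δ s.succ j * δ s.succ k =
      if i = j ∧ j = k then sg i else 0 := by
  induction i using Fin.cases with
  | zero => simp [δ, sg, zero_ne_succ]
  | succ a =>
    simp only [δ, sg, Fin.succ_inj]
    rw [Finset.sum_eq_single a]
    · by_cases h1 : j = a.succ <;> by_cases h2 : k = a.succ <;>
        simp [h1, h2, Fin.succ_ne_zero, eq_comm]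
    · intro b _ hb; simp [Ne.symm hb]
    · simp

lemma Tcw_eq (i j k : Fin (q+1)) :
    Tcw q i j k = δ 0 i * τ j k + δ 0 j * τ i k + δ 0 k * τ i j := by
  unfold Tcw
  have h : ∀ s : Fin q,
      δ 0 i * δ s.succ j * δ s.succ k + δ s.succ i * δ 0 j * δ s.succ k +
        δ s.succ i * δ s.succ j * δ 0 k
      = δ 0 i * (δ s.succ j * δ s.succ k) + δ 0 j * (δ s.succ i * δ s.succ k) +
        δ 0 k * (δ s.succ i * δ s.succ j) := by intro s; ring
  rw [Finset.sum_congr rfl fun s _ => h s]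
  rw [Finset.sum_add_distrib, Finset.sum_add_distrib, ← Finset.mul_sum, ← Finset.mul_sum,
    ← Finset.mul_sum, sum2, sum2, sum2]







noncomputable def slice {n : ℕ} (x : Fin n → ℂ) (S : Fin n → Fin n → Fin n → ℂ) :
    Matrix (Fin n) (Fin n) ℂ :=
  Matrix.of fun j k => ∑ i, x i * S i j k

lemma slice_decomp {n : ℕ} (x : Fin n → ℂ) (u v w : Fin n → Fin n → ℂ) :
    slice x (fun i j k => ∑ s, u s i * v s j * w s k) =
      (Matrix.of fun j s => v s j) * Matrix.diagonal (fun s => ∑ i, x i * u s i) *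
        (Matrix.of fun s k => w s k) := by
  ext j k
  rw [Matrix.mul_assoc]
  simp only [slice, Matrix.of_apply, Matrix.mul_apply, Matrix.diagonal_apply, ite_mul, zero_mul,
    Finset.sum_ite_eq, Finset.mem_univ, if_true, Finset.mul_sum]
  rw [Finset.sum_comm]
  refine Finset.sum_congr rfl fun s _ => ?_
  rw [Finset.sum_mul, Finset.mul_sum]
  exact Finset.sum_congr rfl fun i _ => by ring

lemma vanish {n : ℕ} (x y z : Fin n → ℂ) (S : Fin n → Fin n → Fin n → ℂ)
    (h : rankLE S n) :
    slice y S * (slice x S).adjugate * slice z S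
      = slice z S * (slice x S).adjugate * slice y S := by
  obtain ⟨u, v, w, rfl⟩ := h
  rw [slice_decomp, slice_decomp, slice_decomp]
  set V : Matrix (Fin n) (Fin n) ℂ := Matrix.of fun j s => v s j
  set W : Matrix (Fin n) (Fin n) ℂ := Matrix.of fun s k => w s k
  set dx := fun s => ∑ i, x i * u s i
  set dy := fun s => ∑ i, y i * u s i
  set dz := fun s => ∑ i, z i * u s i
  rw [Matrix.adjugate_mul_distrib, Matrix.adjugate_mul_distrib]
  have key : ∀ a b : Fin n → ℂ,
      V * Matrix.diagonal a * W * (W.adjugate * ((Matrix.diagonal dx).adjugate * V.adjugate)) *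
        (V * Matrix.diagonal b * W)
      = (W.det * V.det) • (V * (Matrix.diagonal a * (Matrix.diagonal dx).adjugate *
          Matrix.diagonal b) * W) := by
    intro a b
    rw [Matrix.adjugate_diagonal]
    simp only [Matrix.mul_assoc]
    rw [← Matrix.mul_assoc W W.adjugate, Matrix.mul_adjugate]
    simp only [Matrix.smul_mul, Matrix.mul_smul, Matrix.one_mul]
    rw [← Matrix.mul_assoc V.adjugate V, Matrix.adjugate_mul]
    simp only [Matrix.smul_mul, Matrix.mul_smul, Matrix.one_mul, smul_smul]
  have hd : Matrix.diagonal dy * (Matrix.diagonal dx).adjugate * Matrix.diagonal dz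
      = Matrix.diagonal dz * (Matrix.diagonal dx).adjugate * Matrix.diagonal dy := by
    rw [Matrix.adjugate_diagonal]
    simp only [Matrix.diagonal_mul_diagonal]
    exact congrArg Matrix.diagonal (funext fun i => by ring)
  rw [key dy dz, key dz dy, hd]
variable {q : ℕ}

lemma continuous_slice {n : ℕ} (x : Fin n → ℂ) :
    Continuous fun S : Fin n → Fin n → Fin n → ℂ => slice x S := by
  apply continuous_matrix
  intro j k
  simp only [slice, Matrix.of_apply]
  apply continuous_finset_sum
  intro i _
  exact continuous_const.mul
    ((continuous_apply k).comp ((continuous_apply j).comp (continuous_apply i)))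


lemma slice_delta {n : ℕ} (a : Fin n) (S : Fin n → Fin n → Fin n → ℂ) :
    slice (δ a) S = Matrix.of fun j k => S a j k := by
  ext j k
  simp only [slice, Matrix.of_apply, δ, ite_mul, one_mul, zero_mul,
    Finset.sum_ite_eq', Finset.mem_univ, if_true]

lemma slice_delta_add {n : ℕ} (a b : Fin n) (S : Fin n → Fin n → Fin n → ℂ) :
    slice (fun i => δ a i + δ b i) S = Matrix.of fun j k => S a j k + S b j k := by
  ext j k
  simp only [slice, Matrix.of_apply, δ, add_mul, ite_mul, one_mul, zero_mul,
    Finset.sum_add_distrib, Finset.sum_ite_eq', Finset.mem_univ, if_true]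

lemma lower (q : ℕ) (hq : 2 ≤ q) : Tcw q ∉ closure {S | rankLE S (q+1)} := by
  have h1 : (1:ℕ) < q + 1 := by omega
  have h2 : (2:ℕ) < q + 1 := by omega
  set i1 : Fin (q+1) := ⟨1, h1⟩ with hi1
  set i2 : Fin (q+1) := ⟨2, h2⟩ with hi2
  have hi10 : i1 ≠ 0 := by simp [hi1, Fin.ext_iff]
  have hi20 : i2 ≠ 0 := by simp [hi2, Fin.ext_iff]
  have hi12 : i1 ≠ i2 := by simp [hi1, hi2, Fin.ext_iff]
  obtain ⟨x, hx⟩ : ∃ x : Fin (q+1) → ℂ, x = fun i => δ 0 i + δ i1 i := ⟨_, rfl⟩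
  obtain ⟨y, hy⟩ : ∃ y : Fin (q+1) → ℂ, y = δ i1 := ⟨_, rfl⟩
  obtain ⟨z, hz⟩ : ∃ z : Fin (q+1) → ℂ, z = δ i2 := ⟨_, rfl⟩
  set g : (Fin (q+1) → Fin (q+1) → Fin (q+1) → ℂ) → ℂ := fun S =>
    (slice y S * (slice x S).adjugate * slice z S
      - slice z S * (slice x S).adjugate * slice y S) 0 i2 with hgdef
  have hgcont : Continuous g := by
    apply Continuous.sub <;>
    · apply Continuous.matrix_elem
      exact (((continuous_slice _).matrix_mul ((continuous_slice _).matrix_adjugate)).matrix_mul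
        (continuous_slice _))
  have hgzero : {S : Fin (q+1) → Fin (q+1) → Fin (q+1) → ℂ | rankLE S (q+1)} ⊆ g ⁻¹' {0} := by
    intro S hS
    have := vanish x y z S hS
    simp [hgdef, this]
  intro hmem
  have hTg : g (Tcw q) = 0 := by
    have := closure_minimal hgzero (isClosed_singleton.preimage hgcont) hmem
    simpa using this
  -- now compute g (Tcw q) ≠ 0
  have d00 : δ (0:Fin (q+1)) (0:Fin (q+1)) = 1 := by simp [δ]
  have d0i1 : δ (0:Fin (q+1)) i1 = 0 := by simp [δ, hi10]
  have d0i2 : δ (0:Fin (q+1)) i2 = 0 := by simp [δ, hi20]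
  have tau0 : ∀ k : Fin (q+1), τ (0:Fin (q+1)) k = 0 := fun k => by simp [τ, sg]
  have taui1 : τ i1 i1 = 1 := by simp [τ, sg, hi10]
  have taui2 : τ i2 i2 = 1 := by simp [τ, sg, hi20]
  have taui12 : τ i1 i2 = 0 := by simp [τ, hi12]
  have taui10 : τ i1 0 = 0 := by simp [τ, hi10]
  have taui20 : τ i2 0 = 0 := by simp [τ, hi20]
  have hA : slice x (Tcw q) =
      Matrix.of (fun j k => τ j k + δ 0 j * τ i1 k + δ 0 k * τ i1 j) := by
    rw [hx, slice_delta_add]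
    ext j k
    simp only [Matrix.of_apply]
    rw [Tcw_eq, Tcw_eq, d00, d0i1, tau0, tau0]
    ring
  have hB : slice y (Tcw q) =
      Matrix.of (fun j k => δ 0 j * τ i1 k + δ 0 k * τ i1 j) := by
    rw [hy, slice_delta]
    ext j k
    simp only [Matrix.of_apply]
    rw [Tcw_eq, d0i1]
    ring
  have hC : slice z (Tcw q) =
      Matrix.of (fun j k => δ 0 j * τ i2 k + δ 0 k * τ i2 j) := by
    rw [hz, slice_delta]
    ext j k
    simp only [Matrix.of_apply]
    rw [Tcw_eq, d0i2]
    ring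
  set H : Matrix (Fin (q+1)) (Fin (q+1)) ℂ := Matrix.of fun j k =>
    if j = 0 then (if k = 0 then -1 else if k = i1 then 1 else 0)
    else if j = i1 then (if k = 0 then 1 else 0)
    else (if k = j then 1 else 0) with hH
  have hAH : slice x (Tcw q) * H = 1 := by
    ext j k
    rw [Matrix.mul_apply, hA]
    simp only [Matrix.of_apply, τ, δ]
    simp only [add_mul, ite_mul, zero_mul, one_mul, mul_ite, mul_zero, mul_one,
      Finset.sum_add_distrib, Finset.sum_ite_eq, Finset.sum_ite_eq', Finset.mem_univ, if_true]
    rw [Matrix.one_apply]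
    by_cases hj0 : j = 0
    · subst hj0
      simp [hH, sg, hi10, eq_comm]
    · by_cases hji1 : j = i1
      · subst hji1
        by_cases hk0 : k = 0
        · subst hk0; simp [hH, sg, hi10]
        · by_cases hki1 : k = i1
          · subst hki1; simp [hH, sg, hi10]
          · simp [hH, sg, hi10, hj0, hk0, hki1, Ne.symm hki1]
      · by_cases hk0 : k = 0
        · subst hk0; simp [hH, sg, hj0, hji1, Ne.symm hj0, Ne.symm hji1]
        · by_cases hkj : k = j
          · subst hkj; simp [hH, sg, hj0, hji1, hk0, Ne.symm hji1]
          · simp [hH, sg, hj0, hji1, hk0, hkj, Ne.symm hkj, Ne.symm hji1]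
  have hdet : IsUnit (slice x (Tcw q)).det := Matrix.isUnit_det_of_right_inverse hAH
  have hinv : (slice x (Tcw q))⁻¹ = H := Matrix.inv_eq_right_inv hAH
  have hadj : (slice x (Tcw q)).adjugate = (slice x (Tcw q)).det • H := by
    calc (slice x (Tcw q)).adjugate = 1 * (slice x (Tcw q)).adjugate := (Matrix.one_mul _).symm
      _ = ((slice x (Tcw q))⁻¹ * slice x (Tcw q)) * (slice x (Tcw q)).adjugate := by
          rw [Matrix.nonsing_inv_mul _ hdet]
      _ = (slice x (Tcw q))⁻¹ * (slice x (Tcw q) * (slice x (Tcw q)).adjugate) := by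
          rw [Matrix.mul_assoc]
      _ = (slice x (Tcw q))⁻¹ * ((slice x (Tcw q)).det • 1) := by rw [Matrix.mul_adjugate]
      _ = (slice x (Tcw q)).det • (slice x (Tcw q))⁻¹ := by
          rw [Matrix.mul_smul, Matrix.mul_one]
      _ = (slice x (Tcw q)).det • H := by rw [hinv]
  have hCcol : ∀ k, (slice z (Tcw q)) k i2 = if k = 0 then 1 else 0 := by
    intro k
    rw [hC]
    simp only [Matrix.of_apply, taui2, d0i2]
    simp [δ]
  have hBrow : ∀ m, (slice y (Tcw q)) 0 m = if m = i1 then 1 else 0 := by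
    intro m
    rw [hB]
    simp only [Matrix.of_apply, d00, taui10]
    simp [τ, sg, hi10, eq_comm]
  have hBcol : ∀ k, (slice y (Tcw q)) k i2 = 0 := by
    intro k
    rw [hB]
    simp only [Matrix.of_apply, taui12, d0i2]
    ring
  have hBHC : (slice y (Tcw q) * H * slice z (Tcw q)) 0 i2 = 1 := by
    rw [Matrix.mul_apply]
    have : ∀ k, (slice y (Tcw q) * H) 0 k * (slice z (Tcw q)) k i2
        = if k = 0 then (slice y (Tcw q) * H) 0 0 else 0 := by
      intro k
      rw [hCcol]
      by_cases hk : k = 0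
      · subst hk; simp
      · simp [hk]
    rw [Finset.sum_congr rfl fun k _ => this k]
    simp only [Finset.sum_ite_eq', Finset.mem_univ, if_true]
    rw [Matrix.mul_apply]
    have h2 : ∀ m, (slice y (Tcw q)) 0 m * H m 0 = if m = i1 then H i1 0 else 0 := by
      intro m
      rw [hBrow]
      by_cases hm : m = i1
      · subst hm; simp
      · simp [hm]
    rw [Finset.sum_congr rfl fun m _ => h2 m]
    simp only [Finset.sum_ite_eq', Finset.mem_univ, if_true]
    simp [hH, hi10]
  have hCHB : (slice z (Tcw q) * H * slice y (Tcw q)) 0 i2 = 0 := by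
    rw [Matrix.mul_apply]
    exact Finset.sum_eq_zero fun k _ => by rw [hBcol, mul_zero]
  have hval : g (Tcw q) = (slice x (Tcw q)).det := by
    rw [hgdef]
    simp only [Matrix.sub_apply, hadj, Matrix.mul_smul, Matrix.smul_mul, Matrix.smul_apply,
      smul_eq_mul]
    rw [hBHC, hCHB]
    ring
  rw [hTg] at hval
  exact hdet.ne_zero hval.symm


lemma rankLE_succ {n₁ n₂ n₃ r : ℕ} (T : Fin n₁ → Fin n₂ → Fin n₃ → ℂ)
    (h : rankLE T r) : rankLE T (r+1) := by
  obtain ⟨u, v, w, rfl⟩ := h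
  refine ⟨Fin.snoc u 0, Fin.snoc v 0, Fin.snoc w 0, ?_⟩
  funext i j k
  rw [Fin.sum_univ_castSucc]
  simp

lemma rankLE_mono {n₁ n₂ n₃ r r' : ℕ} (T : Fin n₁ → Fin n₂ → Fin n₃ → ℂ)
    (hrr : r ≤ r') (h : rankLE T r) : rankLE T r' := by
  obtain ⟨d, rfl⟩ := Nat.exists_eq_add_of_le hrr
  clear hrr
  induction d with
  | zero => exact h
  | succ d ih => exact rankLE_succ _ ih

lemma upper (q : ℕ) : Tcw q ∈ closure {S | rankLE S (q+2)} := by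
  set t : ℕ → ℂ := fun m => ((m:ℂ)+1)⁻¹ with ht
  have ht0 : ∀ m, t m ≠ 0 := by
    intro m
    simp only [ht, ne_eq, inv_eq_zero]
    intro h
    have : ((m:ℂ)+1) ≠ 0 := by
      have := Nat.cast_add_one_ne_zero (R := ℂ) m
      exact_mod_cast this
    exact this h
  set uu : ℕ → Fin (q+2) → Fin (q+1) → ℂ := fun m =>
    Fin.lastCases (fun i => ((t m)⁻¹^3 - q * (t m)⁻¹^2) * δ 0 i)
      (Fin.lastCases (fun i => -((t m)⁻¹^3) * (δ 0 i + (t m)^2 * sg i))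
        (fun s i => (t m)⁻¹^2 * (δ 0 i + t m * δ s.succ i))) with huu
  set vv : ℕ → Fin (q+2) → Fin (q+1) → ℂ := fun m =>
    Fin.lastCases (δ 0)
      (Fin.lastCases (fun i => δ 0 i + (t m)^2 * sg i)
        (fun s i => δ 0 i + t m * δ s.succ i)) with hvv
  set Sm : ℕ → Fin (q+1) → Fin (q+1) → Fin (q+1) → ℂ :=
    fun m i j k => ∑ s, uu m s i * vv m s j * vv m s k with hSm
  set D1 : Fin (q+1) → Fin (q+1) → Fin (q+1) → ℂ := fun i j k =>
    (if i = j ∧ j = k then sg i else 0)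
      - (δ 0 i * sg j * sg k + sg i * δ 0 j * sg k + sg i * sg j * δ 0 k) with hD1
  set D2 : Fin (q+1) → Fin (q+1) → Fin (q+1) → ℂ := fun i j k =>
    -(sg i * sg j * sg k) with hD2
  have hident : ∀ m i j k,
      Sm m i j k = Tcw q i j k + t m * D1 i j k + (t m)^3 * D2 i j k := by
    intro m i j k
    have htm := ht0 m
    simp only [hSm, huu, hvv]
    rw [Fin.sum_univ_castSucc, Fin.sum_univ_castSucc]
    simp only [Fin.lastCases_last, Fin.lastCases_castSucc]
    have hstep : ∀ s : Fin q,
        ((t m)⁻¹^2 * (δ 0 i + t m * δ s.succ i)) * (δ 0 j + t m * δ s.succ j) *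
            (δ 0 k + t m * δ s.succ k)
        = (t m)⁻¹^2 * (δ 0 i * δ 0 j * δ 0 k)
          + ((t m)⁻¹^2 * t m * (δ 0 j * δ 0 k)) * δ s.succ i
          + ((t m)⁻¹^2 * t m * (δ 0 i * δ 0 k)) * δ s.succ j
          + ((t m)⁻¹^2 * t m * (δ 0 i * δ 0 j)) * δ s.succ k
          + ((t m)⁻¹^2 * (t m)^2 * δ 0 i) * (δ s.succ j * δ s.succ k)
          + ((t m)⁻¹^2 * (t m)^2 * δ 0 j) * (δ s.succ i * δ s.succ k)
          + ((t m)⁻¹^2 * (t m)^2 * δ 0 k) * (δ s.succ i * δ s.succ j)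
          + ((t m)⁻¹^2 * (t m)^3) * (δ s.succ i * δ s.succ j * δ s.succ k) := by
      intro s; ring
    rw [Finset.sum_congr rfl fun s _ => hstep s]
    simp only [Finset.sum_add_distrib, ← Finset.mul_sum, Finset.sum_const, Finset.card_univ,
      Fintype.card_fin, nsmul_eq_mul]
    rw [sum1, sum1, sum1, sum2, sum2, sum2, sum3]
    rw [Tcw_eq, hD1, hD2]
    beta_reduce
    generalize (if i = j ∧ j = k then sg i else 0) = E
    field_simp
    ring
  have hrank : ∀ m, Sm m ∈ {S | rankLE S (q+2)} := fun m => ⟨uu m, vv m, vv m, rfl⟩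
  have htend0 : Filter.Tendsto t Filter.atTop (nhds 0) := by
    have hre : Filter.Tendsto (fun n : ℕ => ((n:ℝ) + 1)⁻¹) Filter.atTop (nhds 0) := by
      simpa [one_div] using (tendsto_one_div_add_atTop_nhds_zero_nat :
        Filter.Tendsto (fun n : ℕ => 1 / ((n : ℝ) + 1)) Filter.atTop (nhds 0))
    have h2 := (Complex.continuous_ofReal.tendsto 0).comp hre
    have h3 : Filter.Tendsto (fun m : ℕ => ((m:ℂ) + 1)⁻¹) Filter.atTop (nhds 0) := by
      refine Filter.Tendsto.congr (fun m => ?_) (by simpa using h2)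
      show ((((m:ℝ) + 1)⁻¹ : ℝ) : ℂ) = ((m:ℂ) + 1)⁻¹
      push_cast
      rfl
    exact h3
  have htendS : Filter.Tendsto Sm Filter.atTop (nhds (Tcw q)) := by
    rw [tendsto_pi_nhds]
    intro i
    rw [tendsto_pi_nhds]
    intro j
    rw [tendsto_pi_nhds]
    intro k
    have : Filter.Tendsto (fun m => Tcw q i j k + t m * D1 i j k + (t m)^3 * D2 i j k)
        Filter.atTop (nhds (Tcw q i j k)) := by
      have h := (tendsto_const_nhds (x := Tcw q i j k) (f := Filter.atTop (α := ℕ))).add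
        ((htend0.mul_const (D1 i j k)).add (((htend0.pow 3)).mul_const (D2 i j k)))
      simpa [add_assoc] using h
    exact this.congr fun m => (hident m i j k).symm
  exact mem_closure_of_tendsto htendS (Filter.Eventually.of_forall hrank)

end S14

/-- for `q ≥ 2` the border rank of the easy Coppersmith–Winograd
tensor equals `q + 2`. -/
theorem stmt14 (q : ℕ) (hq : 2 ≤ q) : bRank (Tcw q) = q + 2 := by
  unfold bRank
  apply le_antisymm
  · exact Nat.sInf_le (S14.upper q)
  · apply le_csInf ⟨q + 2, S14.upper q⟩
    intro b hb
    by_contra hlt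
    push_neg at hlt
    exact S14.lower q hq
      (closure_mono (fun S hS => S14.rankLE_mono S (by omega) hS) hb)
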